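/- Let L ⊆ ℝ^n be a line with positive slope and let u ∈ L be such that {c ∈ C̄ : c ≼ u} is nonempty, with greatest element ū. Then ū is the greatest element of the set {u′ ∈ C̄ : ū ≼ u′ and S_L(ū) ∩ S_L(u′) ≠ ∅}; that is, ū = overline(overline(ū))^L. -/

import Mathlib

/-- `L ⊆ ℝⁿ` is a line with positive slope: `L = {u₀ + t·m : t ∈ ℝ}` with all
coordinates of the velocity vector `m` positive. -/
def PosLine {n : ℕ} (L : Set (Fin n → ℝ)) : Prop :=
  ∃ u₀ m : Fin n → ℝ, (∀ i, 0 < m i) ∧ L = {x | ∃ t : ℝ, x = u₀ + t • m}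

/-- For `∅ ≠ A ⊆ {1,…,n}`, the open face
`S_A(u) = {x : x_i = u_i for i ∈ A, x_j > u_j for j ∉ A}` of the boundary of
the positive cone of `u`. -/
def SFace {n : ℕ} (A : Finset (Fin n)) (u : Fin n → ℝ) : Set (Fin n → ℝ) :=
  {x | (∀ i ∈ A, x i = u i) ∧ ∀ j ∉ A, u j < x j}

/-- let `C̄` be a finite nonempty subset of `ℝⁿ` closed under
componentwise maxima, `L` a line with positive slope, `u ∈ L` with
`{c ∈ C̄ : c ≼ u}` nonempty and greatest element `ū`. Then `ū` is the
greatest element of `{u' ∈ C̄ : ū ≼ u' and S_L(ū) ∩ S_L(u') ≠ ∅}`; that is,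
`ū = overline(overline(ū))^L`. -/
theorem stmt_12 {n : ℕ} (hn : 0 < n) (L : Set (Fin n → ℝ)) (hL : PosLine L)
    (Cbar : Finset (Fin n → ℝ)) (hCne : Cbar.Nonempty)
    (hclosed : ∀ a ∈ Cbar, ∀ b ∈ Cbar, a ⊔ b ∈ Cbar)
    (pushL : (Fin n → ℝ) → (Fin n → ℝ))
    (hpush : ∀ w : Fin n → ℝ, IsLeast {x | x ∈ L ∧ w ≤ x} (pushL w))
    (AL : (Fin n → ℝ) → Finset (Fin n))
    (hAL : ∀ w : Fin n → ℝ, (AL w).Nonempty ∧ pushL w ∈ SFace (AL w) w)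
    (u ubar : Fin n → ℝ) (huL : u ∈ L)
    (hubar : IsGreatest {c | c ∈ Cbar ∧ c ≤ u} ubar) :
    IsGreatest {u' | u' ∈ Cbar ∧ ubar ≤ u' ∧
      (SFace (AL ubar) ubar ∩ SFace (AL u') u').Nonempty} ubar := by
  obtain ⟨u₀, m, hm, hLeq⟩ := hL
  obtain ⟨hAne, hAface⟩ := hAL ubar
  constructor
  · exact ⟨hubar.1.1, le_refl _, ⟨pushL ubar, hAface, hAface⟩⟩
  · rintro u' ⟨hu'C, hle, x, hx1, hx2⟩
    obtain ⟨i, hiA⟩ := hAne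
    have hxi : x i = ubar i := hx1.1 i hiA
    have hiA' : i ∈ AL u' := by
      by_contra h
      have := hx2.2 i h
      rw [hxi] at this
      exact absurd (hle i) (not_le.mpr this)
    have hui' : u' i = ubar i := by rw [← hx2.1 i hiA', hxi]
    -- the pushed points
    have hy := hpush ubar
    have hz := hpush u'
    have hyi : pushL ubar i = ubar i := hAface.1 i hiA
    have hzi : pushL u' i = u' i := (hAL u').2.1 i hiA'
    -- both on the line
    have hyL : pushL ubar ∈ L := hy.1.1
    have hzL : pushL u' ∈ L := hz.1.1
    rw [hLeq] at hyL hzL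
    obtain ⟨s, hs⟩ := hyL
    obtain ⟨t, ht⟩ := hzL
    have heq : pushL u' = pushL ubar := by
      have h1 : u₀ i + s * m i = u₀ i + t * m i := by
        have e1 : pushL ubar i = u₀ i + s * m i := by rw [hs]; simp [mul_comm]
        have e2 : pushL u' i = u₀ i + t * m i := by rw [ht]; simp [mul_comm]
        rw [← e1, ← e2, hyi, hzi, hui']
      have hst : s = t := by
        have := hm i
        exact mul_right_cancel₀ this.ne' (by linarith)
      rw [hs, ht, hst]
    have hyu : pushL ubar ≤ u := hy.2 ⟨huL, hubar.1.2⟩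
    have hu'u : u' ≤ u := le_trans (le_trans hz.1.2 (heq ▸ hyu)) (le_refl u)
    exact hubar.2 ⟨hu'C, hu'u⟩
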